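/- Let x_1, ..., x_g be variables and p_k = x_1^k + ... + x_g^k. For every n ≥ 2g, the power sum p_n lies in the ideal of ℚ[x_1,...,x_g] generated by the even power sums p_2, p_4, p_6, .... -/

import Mathlib

open MvPolynomial Finset

/-- For every `n ≥ 2g`, the power sum `p_n` lies in the ideal of `ℚ[x_1,...,x_g]`
generated by the even power sums `p_2, p_4, p_6, ...`. -/
theorem psum_mem_ideal_span_even_psums (g n : ℕ) (hn : 2 * g ≤ n) :
    psum (Fin g) ℚ n ∈
    Ideal.span {p : MvPolynomial (Fin g) ℚ |
      ∃ k : ℕ, 0 < k ∧ Even k ∧ p = psum (Fin g) ℚ k} := by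
  set I := Ideal.span {p : MvPolynomial (Fin g) ℚ |
      ∃ k : ℕ, 0 < k ∧ Even k ∧ p = psum (Fin g) ℚ k} with hI
  -- the squaring substitution
  set φ : MvPolynomial (Fin g) ℚ →ₐ[ℚ] MvPolynomial (Fin g) ℚ :=
    aeval (fun i => X i ^ 2) with hφ
  have hpsum : ∀ k : ℕ, φ (psum (Fin g) ℚ k) = psum (Fin g) ℚ (2 * k) := by
    intro k
    simp [hφ, psum, map_sum, ← pow_mul, mul_comm]
  have hpsum_mem : ∀ k : ℕ, 0 < k → psum (Fin g) ℚ (2 * k) ∈ I := by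
    intro k hk
    exact Ideal.subset_span ⟨2 * k, by positivity, even_two_mul k, rfl⟩
  -- elementary symmetric polynomials of the squares lie in I
  have hesymm : ∀ k : ℕ, 0 < k → φ (esymm (Fin g) ℚ k) ∈ I := by
    intro k hk
    have hN := congrArg φ (mul_esymm_eq_sum (Fin g) ℚ k)
    simp only [map_mul, map_sum, map_pow, map_neg, map_one, map_natCast, hpsum] at hN
    have h2 : ((k : MvPolynomial (Fin g) ℚ)) * φ (esymm (Fin g) ℚ k) ∈ I := by
      rw [hN]
      refine Ideal.mul_mem_left _ _ (Ideal.sum_mem _ ?_)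
      rintro ⟨a, b⟩ hab
      simp only [Finset.mem_filter, Finset.mem_antidiagonal] at hab
      have hb : 0 < b := by simp at hab; omega
      exact Ideal.mul_mem_left _ _ (hpsum_mem b hb)
    have hk' : (C ((k : ℚ)⁻¹) : MvPolynomial (Fin g) ℚ) * (k : MvPolynomial (Fin g) ℚ) = 1 := by
      rw [show ((k : MvPolynomial (Fin g) ℚ)) = C ((k : ℚ)) by simp, ← C_mul,
        inv_mul_cancel₀ (by exact_mod_cast hk.ne')]
      simp
    have := Ideal.mul_mem_left I (C ((k : ℚ)⁻¹)) h2
    rwa [← mul_assoc, hk', one_mul] at this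
  -- Cayley–Hamilton for the squares: `X j ^ (2g) ∈ I`
  have hCH : ∀ j : Fin g, (X j : MvPolynomial (Fin g) ℚ) ^ (2 * g) ∈ I := by
    intro j
    have hV := congrArg (Polynomial.eval (-(X j : MvPolynomial (Fin g) ℚ)))
      (MvPolynomial.prod_C_add_X_eq_sum_esymm ℚ (Fin g))
    simp only [Polynomial.eval_prod, Polynomial.eval_add, Polynomial.eval_X, Polynomial.eval_C,
      Polynomial.eval_finset_sum, Polynomial.eval_mul, Polynomial.eval_pow,
      Fintype.card_fin] at hV
    have h0 : (∏ i : Fin g, (-(X j : MvPolynomial (Fin g) ℚ) + X i)) = 0 :=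
      Finset.prod_eq_zero (Finset.mem_univ j) (by ring)
    rw [h0] at hV
    have hV2 := congrArg φ hV.symm
    simp only [map_sum, map_mul, map_pow, map_neg, map_zero, hφ, aeval_X] at hV2
    -- hV2 : ∑ j' in range (g+1), φ (esymm j') * (-(X j ^ 2)) ^ (g - j') = 0
    rw [Finset.sum_range_succ'] at hV2
    simp only [esymm_zero, map_one, one_mul, Nat.sub_zero] at hV2
    have hmem : (-(X j : MvPolynomial (Fin g) ℚ) ^ 2) ^ g ∈ I := by
      have : (-(X j : MvPolynomial (Fin g) ℚ) ^ 2) ^ g =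
          -∑ i ∈ range g, φ (esymm (Fin g) ℚ (i + 1)) * (-(X j) ^ 2) ^ (g - (i + 1)) := by
        linear_combination hV2
      rw [this]
      refine neg_mem (Ideal.sum_mem _ fun i _ => ?_)
      exact Ideal.mul_mem_right _ _ (hesymm (i + 1) i.succ_pos)
    have heq : (X j : MvPolynomial (Fin g) ℚ) ^ (2 * g) =
        (-1) ^ g * (-(X j) ^ 2) ^ g := by
      ring_nf
      rw [Even.neg_one_pow ⟨g, mul_two g⟩, mul_one]
    rw [heq]
    exact Ideal.mul_mem_left _ _ hmem
  -- conclude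
  have hsplit : psum (Fin g) ℚ n =
      ∑ j : Fin g, (X j : MvPolynomial (Fin g) ℚ) ^ (n - 2 * g) * X j ^ (2 * g) := by
    unfold psum
    refine Finset.sum_congr rfl fun j _ => ?_
    rw [← pow_add, Nat.sub_add_cancel hn]
  rw [hsplit]
  exact Ideal.sum_mem _ fun j _ => Ideal.mul_mem_left _ _ (hCH j)
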